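/- Let k ≥ 1 be an integer and l = 2k − 1. Work in ℝ^{l+1} and set 2ρ = ∑_{i=1}^{l+1} (l + 2 − 2i)·ε_i (the sum of the positive roots ε_i − ε_j, i < j, of A_l). Then: (1) 2ρ = 2·∑_{(i,j) : 1≤i<j≤l+1, j−i>k} (ε_i − ε_j) + ∑_{i=1}^{k} (ε_i − ε_{i+k}); (2) the set Ψ = {ε_i − ε_j : 1 ≤ i < j ≤ l+1 and j − i ≥ k} spans the hyperplane V = {x ∈ ℝ^{l+1} : ∑_{i=1}^{l+1} x_i = 0}; (3) for all β, β′ ∈ Ψ (including β = β′), β + β′ ∉ Φ(A_l). -/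
import Mathlib


/-- `eps l i` is the standard basis vector of `ℝ^l` with `1`-based index `i`. -/
def eps (l : ℕ) (i : ℕ) : Fin l → ℝ := fun j => if (j : ℕ) + 1 = i then 1 else 0

/-- The root system `Φ(A_l)` in `ℝ^{l+1}` (here `n = l+1`): the vectors
`ε_a - ε_b` for `a ≠ b`. -/
def PhiA (n : ℕ) : Set (Fin n → ℝ) :=
  {v | ∃ a b, 1 ≤ a ∧ a ≤ n ∧ 1 ≤ b ∧ b ≤ n ∧ a ≠ b ∧ v = eps n a - eps n b}

/-- `Ψ = {ε_i - ε_j : 1 ≤ i < j ≤ l+1, j - i ≥ k}`. -/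
def PsiA_odd (l k : ℕ) : Set (Fin (l + 1) → ℝ) :=
  {v | ∃ i j, 1 ≤ i ∧ i < j ∧ j ≤ l + 1 ∧ k ≤ j - i ∧
      v = eps (l + 1) i - eps (l + 1) j}

lemma sum_Icc_eps (n : ℕ) (t : Fin n) (g : ℕ → ℝ) :
    ∑ i ∈ Finset.Icc 1 n, g i * eps n i t = g ((t:ℕ)+1) := by
  have htl := t.isLt
  rw [Finset.sum_eq_single ((t:ℕ)+1)]
  · simp [eps]
  · intro i hi hne
    simp [eps, Ne.symm hne]
  · intro h
    exact absurd (Finset.mem_Icc.mpr (by omega)) h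

lemma sum_Icc_eps' (n a b : ℕ) (t : Fin n) :
    ∑ j ∈ Finset.Icc a b, eps n j t = if a ≤ (t:ℕ)+1 ∧ (t:ℕ)+1 ≤ b then 1 else 0 := by
  simp only [eps]
  rw [Finset.sum_ite_eq (Finset.Icc a b) ((t:ℕ)+1) (fun _ => (1:ℝ))]
  simp [Finset.mem_Icc]

lemma sum_univ_mul_eps (n a : ℕ) (h1 : 1 ≤ a) (h2 : a ≤ n) (g : ℕ → ℝ) :
    ∑ t : Fin n, g ((t:ℕ)+1) * eps n a t = g a := by
  rw [Finset.sum_eq_single (⟨a-1, by omega⟩ : Fin n)]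
  · have ha : a - 1 + 1 = a := by omega
    simp [eps, ha]
  · intro t _ hne
    rw [eps]
    rw [if_neg (by intro hh; exact hne (Fin.ext (show (t:ℕ) = a - 1 by omega))), mul_zero]
  · simp

lemma sum_univ_eps (n a : ℕ) (h1 : 1 ≤ a) (h2 : a ≤ n) :
    ∑ t : Fin n, eps n a t = 1 := by
  simpa using sum_univ_mul_eps n a h1 h2 (fun _ => 1)

lemma elem_mem_span (k l : ℕ) (hk : 1 ≤ k) (hl : l = 2 * k - 1) (i : ℕ)
    (h1 : 1 ≤ i) (h2 : i ≤ l) :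
    eps (l+1) i - eps (l+1) (l+1) ∈ Submodule.span ℝ (PsiA_odd l k) := by
  have hl1 : l + 1 = 2 * k := by omega
  rcases le_or_gt i k with h | h
  · exact Submodule.subset_span ⟨i, l+1, h1, by omega, le_rfl, by omega, rfl⟩
  · have m1 : eps (l+1) (i-k) - eps (l+1) (l+1) ∈ Submodule.span ℝ (PsiA_odd l k) :=
      Submodule.subset_span ⟨i-k, l+1, by omega, by omega, le_rfl, by omega, rfl⟩
    have m2 : eps (l+1) (i-k) - eps (l+1) i ∈ Submodule.span ℝ (PsiA_odd l k) :=
      Submodule.subset_span ⟨i-k, i, by omega, by omega, by omega, by omega, rfl⟩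
    have : eps (l+1) i - eps (l+1) (l+1)
        = (eps (l+1) (i-k) - eps (l+1) (l+1)) - (eps (l+1) (i-k) - eps (l+1) i) := by
      abel
    rw [this]
    exact Submodule.sub_mem _ m1 m2

/-- Type `A_l`, `l = 2k - 1` odd. Note that `j - i > k` is written `i + k + 1 ≤ j`. -/
theorem stmt_11 (k l : ℕ) (hk : 1 ≤ k) (hl : l = 2 * k - 1) :
    ((∑ i ∈ Finset.Icc 1 (l + 1), ((l : ℝ) + 2 - 2 * i) • eps (l + 1) i)
      = (2 : ℝ) • (∑ i ∈ Finset.Icc 1 (l + 1), ∑ j ∈ Finset.Icc (i + k + 1) (l + 1),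
            (eps (l + 1) i - eps (l + 1) j))
        + ∑ i ∈ Finset.Icc 1 k, (eps (l + 1) i - eps (l + 1) (i + k))) ∧
    (Submodule.span ℝ (PsiA_odd l k) : Set (Fin (l + 1) → ℝ))
      = {x : Fin (l + 1) → ℝ | ∑ i, x i = 0} ∧
    (∀ β ∈ PsiA_odd l k, ∀ β' ∈ PsiA_odd l k, β + β' ∉ PhiA (l + 1)) := by
  have hl1 : l + 1 = 2 * k := by omega
  refine ⟨?_, ?_, ?_⟩
  · -- Part 1
    funext t
    have htl : (t : ℕ) < l + 1 := t.isLt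
    simp only [Finset.sum_apply, Pi.add_apply, Pi.smul_apply, Pi.sub_apply, smul_eq_mul]
    have e1 : ∑ i ∈ Finset.Icc 1 (l+1), ((l : ℝ) + 2 - 2 * i) * eps (l+1) i t
        = (l : ℝ) + 2 - 2 * ((t:ℕ)+1) := by
      have := sum_Icc_eps (l+1) t (fun i => (l : ℝ) + 2 - 2 * i)
      simpa using this
    have e2 : ∑ i ∈ Finset.Icc 1 (l+1), ∑ j ∈ Finset.Icc (i+k+1) (l+1),
          (eps (l+1) i t - eps (l+1) j t)
        = (((l+1) - ((t:ℕ)+1+k) : ℕ) : ℝ) - ((((t:ℕ)+1) - (k+1) : ℕ) : ℝ) := by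
      simp only [Finset.sum_sub_distrib]
      congr 1
      · have : ∀ i ∈ Finset.Icc 1 (l+1), ∑ j ∈ Finset.Icc (i+k+1) (l+1), eps (l+1) i t
            = (((Finset.Icc (i+k+1) (l+1)).card : ℝ)) * eps (l+1) i t := by
          intro i _
          rw [Finset.sum_const, nsmul_eq_mul]
        rw [Finset.sum_congr rfl this, sum_Icc_eps (l+1) t
          (fun i => ((Finset.Icc (i+k+1) (l+1)).card : ℝ))]
        rw [Nat.card_Icc]
        congr 1
        omega
      · have : ∀ i ∈ Finset.Icc 1 (l+1), ∑ j ∈ Finset.Icc (i+k+1) (l+1), eps (l+1) j t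
            = if i+k+1 ≤ (t:ℕ)+1 ∧ (t:ℕ)+1 ≤ l+1 then (1:ℝ) else 0 := by
          intro i _
          exact sum_Icc_eps' (l+1) (i+k+1) (l+1) t
        rw [Finset.sum_congr rfl this, Finset.sum_boole]
        have hf : (Finset.Icc 1 (l+1)).filter (fun i => i+k+1 ≤ (t:ℕ)+1 ∧ (t:ℕ)+1 ≤ l+1)
            = Finset.Icc 1 ((t:ℕ)+1 - (k+1)) := by
          ext i
          simp only [Finset.mem_filter, Finset.mem_Icc]
          omega
        rw [hf, Nat.card_Icc]
        congr 1
    have e3 : ∑ i ∈ Finset.Icc 1 k, (eps (l+1) i t - eps (l+1) (i+k) t)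
        = (if 1 ≤ (t:ℕ)+1 ∧ (t:ℕ)+1 ≤ k then (1:ℝ) else 0)
          - (if 1+k ≤ (t:ℕ)+1 ∧ (t:ℕ)+1 ≤ k+k then (1:ℝ) else 0) := by
      rw [Finset.sum_sub_distrib]
      congr 1
      · exact sum_Icc_eps' (l+1) 1 k t
      · have : ∑ i ∈ Finset.Icc 1 k, eps (l+1) (i+k) t
            = ∑ j ∈ Finset.Icc (1+k) (k+k), eps (l+1) j t := by
          rw [← Finset.map_add_right_Icc 1 k k, Finset.sum_map]
          rfl
        rw [this]
        exact sum_Icc_eps' (l+1) (1+k) (k+k) t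
    rw [e1, e2, e3]
    have hlr : (l : ℝ) + 1 = 2 * k := by exact_mod_cast congrArg (Nat.cast (R := ℝ)) hl1
    rcases le_or_gt ((t:ℕ)+1) k with h | h
    · rw [if_pos (by omega), if_neg (by omega)]
      have c1 : (l+1) - ((t:ℕ)+1+k) = k - ((t:ℕ)+1) := by omega
      have c2 : ((t:ℕ)+1) - (k+1) = 0 := by omega
      rw [c1, c2, Nat.cast_sub h, Nat.cast_zero]
      push_cast
      linarith
    · rw [if_neg (by omega), if_pos (by omega)]
      have c1 : (l+1) - ((t:ℕ)+1+k) = 0 := by omega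
      rw [c1, Nat.cast_zero, Nat.cast_sub (by omega : k+1 ≤ (t:ℕ)+1)]
      push_cast
      linarith
  · -- Part 2
    ext x
    simp only [SetLike.mem_coe, Set.mem_setOf_eq]
    constructor
    · intro hx
      induction hx using Submodule.span_induction with
      | mem v hv =>
        obtain ⟨i, j, hi1, hij, hj, hkij, rfl⟩ := hv
        simp only [Pi.sub_apply, Finset.sum_sub_distrib]
        rw [sum_univ_eps (l+1) i hi1 (by omega), sum_univ_eps (l+1) j (by omega) hj]
        ring
      | zero => simp
      | add v w _ _ ihv ihw => simp [Finset.sum_add_distrib, ihv, ihw]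
      | smul a v _ ihv =>
        simp only [Pi.smul_apply, smul_eq_mul]
        rw [← Finset.mul_sum, ihv, mul_zero]
    · intro hx
      have hrep : x = ∑ m : Fin (l+1), x m • (eps (l+1) ((m:ℕ)+1) - eps (l+1) (l+1)) := by
        funext s
        have hs := s.isLt
        simp only [Finset.sum_apply, Pi.smul_apply, Pi.sub_apply, smul_eq_mul, mul_sub,
          Finset.sum_sub_distrib]
        have hA : ∑ m : Fin (l+1), x m * eps (l+1) ((m:ℕ)+1) s = x s := by
          rw [Finset.sum_eq_single s]
          · simp [eps]
          · intro m _ hms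
            rw [eps, if_neg (by intro hh; exact hms (Fin.ext (by omega))), mul_zero]
          · simp
        have hB : ∑ m : Fin (l+1), x m * eps (l+1) (l+1) s
            = (∑ m, x m) * eps (l+1) (l+1) s := by
          rw [Finset.sum_mul]
        rw [hA, hB, hx, zero_mul, sub_zero]
      rw [hrep]
      apply Submodule.sum_mem
      intro m _
      apply Submodule.smul_mem
      have hm := m.isLt
      by_cases hml : (m:ℕ) + 1 = l + 1
      · rw [hml]
        simp
      · exact elem_mem_span k l hk hl ((m:ℕ)+1) (by omega) (by omega)
  · -- Part 3
    set W : ℕ → ℝ := fun m => if m ≤ k then 1 else -1 with hW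
    have hWv : ∀ m, W m = 1 ∨ W m = -1 := by
      intro m; rw [hW]; dsimp only; split <;> simp
    have Fpsi : ∀ β ∈ PsiA_odd l k, ∑ t : Fin (l+1), W ((t:ℕ)+1) * β t = 2 := by
      rintro β ⟨i, j, hi1, hij, hj, hkij, rfl⟩
      simp only [Pi.sub_apply, mul_sub, Finset.sum_sub_distrib]
      rw [sum_univ_mul_eps (l+1) i hi1 (by omega) W,
          sum_univ_mul_eps (l+1) j (by omega) hj W]
      have hik : i ≤ k := by omega
      have hjk : ¬ (j ≤ k) := by omega
      rw [hW]
      simp [hik, hjk]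
      norm_num
    rintro β hβ β' hβ' ⟨a, b, ha1, ha, hb1, hb, hab, heq⟩
    have h4 : ∑ t : Fin (l+1), W ((t:ℕ)+1) * (β + β') t = 4 := by
      simp only [Pi.add_apply, mul_add, Finset.sum_add_distrib]
      rw [Fpsi β hβ, Fpsi β' hβ']
      norm_num
    rw [heq] at h4
    simp only [Pi.sub_apply, mul_sub, Finset.sum_sub_distrib] at h4
    rw [sum_univ_mul_eps (l+1) a ha1 ha W, sum_univ_mul_eps (l+1) b hb1 hb W] at h4
    rcases hWv a with h | h <;> rcases hWv b with h' | h' <;> rw [h, h'] at h4 <;> norm_num at h4
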